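/- For every bounded continuous function f : ℝ → ℝ, the function x ↦ (p*f)(x) is twice differentiable on ℝ and satisfies (p*f)''(x) = (p*f)(x) − f(x) for all x ∈ ℝ; that is, u = p*f solves u − u'' = f. -/

import Mathlib

open MeasureTheory Real Set

/-- The convolution `(p*f)(x) = ∫_ℝ (1/2) e^{-|x-y|} f(y) dy` with `p(x) = (1/2)exp(-|x|)`. -/
noncomputable def pConv (f : ℝ → ℝ) (x : ℝ) : ℝ := ∫ y : ℝ, (1/2) * Real.exp (-|x - y|) * f y

/-- `(p₊*f)(x) = (1/2)∫_{-∞}^{x} e^{y-x} f(y) dy`. -/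
noncomputable def pPlus (f : ℝ → ℝ) (x : ℝ) : ℝ := (1/2) * ∫ y in Set.Iic x, Real.exp (y - x) * f y

/-- `(p₋*f)(x) = (1/2)∫_{x}^{∞} e^{x-y} f(y) dy`. -/
noncomputable def pMinus (f : ℝ → ℝ) (x : ℝ) : ℝ := (1/2) * ∫ y in Set.Ici x, Real.exp (x - y) * f y

lemma exp_split (a b : ℝ) : Real.exp (a - b) = Real.exp (-b) * Real.exp a := by
  rw [← Real.exp_add]; congr 1; ring

/-- Integrability of `e^y g y` on `Iic x` for bounded continuous `g`. -/
lemma aux_integrableOn_Iic (g : ℝ → ℝ) (hg : Continuous g) {C : ℝ} (hb : ∀ x, |g x| ≤ C)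
    (x : ℝ) : IntegrableOn (fun y => Real.exp y * g y) (Set.Iic x) := by
  have hmaj : IntegrableOn (fun y => C * Real.exp y) (Set.Iic x) :=
    (integrableOn_exp_Iic x).const_mul C
  refine Integrable.mono' hmaj ((Real.continuous_exp.mul hg)).aestronglyMeasurable ?_
  filter_upwards with y
  rw [Real.norm_eq_abs, abs_mul, abs_of_pos (Real.exp_pos y)]
  calc Real.exp y * |g y| ≤ Real.exp y * C :=
        mul_le_mul_of_nonneg_left (hb y) (Real.exp_pos y).le
    _ = C * Real.exp y := mul_comm _ _

/-- FTC for integrals over `Iic`. -/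
lemma aux_hasDerivAt_Iic (g : ℝ → ℝ) (hg : Continuous g)
    (hint : ∀ x, IntegrableOn g (Set.Iic x)) (x : ℝ) :
    HasDerivAt (fun t => ∫ y in Set.Iic t, g y) (g x) x := by
  have key : ∀ t, (∫ y in Set.Iic t, g y) = (∫ y in Set.Iic x, g y) + ∫ y in x..t, g y := by
    intro t
    rw [← intervalIntegral.integral_Iic_sub_Iic (hint x) (hint t)]
    ring
  have hd : HasDerivAt (fun t => (∫ y in Set.Iic x, g y) + ∫ y in x..t, g y) (g x) x :=
    (intervalIntegral.integral_hasDerivAt_right (hg.intervalIntegrable x x)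
      (hg.stronglyMeasurableAtFilter _ _) hg.continuousAt).const_add _
  exact hd.congr_of_eventuallyEq (Filter.Eventually.of_forall key)

theorem stmt1 (f : ℝ → ℝ) (hf : Continuous f) (hb : ∃ C, ∀ x, |f x| ≤ C) :
    (∀ x : ℝ, DifferentiableAt ℝ (pConv f) x) ∧
    (∀ x : ℝ, HasDerivAt (deriv (pConv f)) (pConv f x - f x) x) := by
  obtain ⟨C, hC⟩ := hb
  set g : ℝ → ℝ := fun y => Real.exp y * f y with hg_def
  set h : ℝ → ℝ := fun y => Real.exp (-y) * f y with hh_def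
  have hgint : ∀ x, IntegrableOn g (Set.Iic x) := aux_integrableOn_Iic f hf hC
  have hgc : Continuous g := Real.continuous_exp.mul hf
  have hfneg : Continuous (fun y => f (-y)) := hf.comp continuous_neg
  have hhnegint : ∀ x, IntegrableOn (fun y => Real.exp y * f (-y)) (Set.Iic x) :=
    aux_integrableOn_Iic (fun y => f (-y)) hfneg (fun x => hC (-x))
  have hhint : ∀ x, IntegrableOn h (Set.Ici x) := by
    intro x
    rw [integrableOn_Ici_iff_integrableOn_Ioi]
    have hmaj : IntegrableOn (fun y => C * Real.exp (-y)) (Set.Ioi x) := by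
      have := (exp_neg_integrableOn_Ioi x one_pos).const_mul C
      simp only [neg_one_mul] at this; exact this
    refine Integrable.mono' hmaj
      ((Real.continuous_exp.comp continuous_neg).mul hf).aestronglyMeasurable ?_
    filter_upwards with y
    rw [Real.norm_eq_abs, abs_mul, abs_of_pos (Real.exp_pos _)]
    calc Real.exp (-y) * |f y| ≤ Real.exp (-y) * C :=
          mul_le_mul_of_nonneg_left (hC y) (Real.exp_pos _).le
      _ = C * Real.exp (-y) := mul_comm _ _
  set F : ℝ → ℝ := fun t => ∫ y in Set.Iic t, g y with hF_def
  set G : ℝ → ℝ := fun t => ∫ y in Set.Ici t, h y with hG_def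
  have hF : ∀ x, HasDerivAt F (g x) x := aux_hasDerivAt_Iic g hgc hgint
  set H : ℝ → ℝ := fun s => ∫ y in Set.Iic s, Real.exp y * f (-y) with hH_def
  have hH : ∀ s, HasDerivAt H (Real.exp s * f (-s)) s :=
    aux_hasDerivAt_Iic _ (Real.continuous_exp.mul hfneg) hhnegint
  have hGH : ∀ t, G t = H (-t) := by
    intro t
    have e1 : (∫ y in Set.Iic (-t), h (-y)) = ∫ y in Set.Ioi t, h y := by
      simpa using integral_comp_neg_Iic (-t) h
    have e2 : (∫ y in Set.Ioi t, h y) = ∫ y in Set.Ici t, h y :=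
      (MeasureTheory.integral_Ici_eq_integral_Ioi).symm
    have key : ∀ y ∈ Set.Iic (-t), h (-y) = Real.exp y * f (-y) := by
      intro y _; simp [hh_def]
    simp only [hG_def, hH_def]
    rw [← e2, ← e1]
    exact setIntegral_congr_fun measurableSet_Iic key
  have hG : ∀ x, HasDerivAt G (-(h x)) x := by
    intro x
    have hcomp : HasDerivAt (fun t => H (-t)) (Real.exp (-x) * f (- -x) * (-1)) x :=
      (hH (-x)).comp x (hasDerivAt_neg x)
    have h2 : HasDerivAt (fun t => H (-t)) (-(h x)) x := by
      convert hcomp using 1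
      simp [hh_def]
    exact h2.congr_of_eventuallyEq (Filter.Eventually.of_forall hGH)
  have hPlusEq : ∀ t, pPlus f t = (1/2) * (Real.exp (-t) * F t) := by
    intro t
    have key : ∀ y ∈ Set.Iic t, Real.exp (y - t) * f y = Real.exp (-t) * g y := by
      intro y _
      simp only [hg_def]
      rw [exp_split, mul_assoc]
    rw [pPlus, setIntegral_congr_fun measurableSet_Iic key, MeasureTheory.integral_const_mul]
  have hMinusEq : ∀ t, pMinus f t = (1/2) * (Real.exp t * G t) := by
    intro t
    have key : ∀ y ∈ Set.Ici t, Real.exp (t - y) * f y = Real.exp t * h y := by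
      intro y _
      simp only [hh_def]
      rw [exp_split, mul_comm (Real.exp (-y)) (Real.exp t), mul_assoc]
    rw [pMinus, setIntegral_congr_fun measurableSet_Ici key, MeasureTheory.integral_const_mul]
  have hPlus : ∀ x, HasDerivAt (pPlus f) (-(pPlus f x) + (1/2) * f x) x := by
    intro x
    have hexp : HasDerivAt (fun t => Real.exp (-t)) (Real.exp (-x) * (-1)) x :=
      (Real.hasDerivAt_exp (-x)).comp x (hasDerivAt_neg x)
    have hd : HasDerivAt (fun t => (1/2) * (Real.exp (-t) * F t))
        ((1/2) * ((Real.exp (-x) * (-1)) * F x + Real.exp (-x) * g x)) x :=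
      (hexp.mul (hF x)).const_mul (1/2)
    have h2 : HasDerivAt (fun t => (1/2) * (Real.exp (-t) * F t)) (-(pPlus f x) + (1/2) * f x) x := by
      convert hd using 1
      rw [hPlusEq x]
      simp only [hg_def]
      have e : Real.exp (-x) * (Real.exp x * f x) = f x := by
        rw [← mul_assoc, ← Real.exp_add]; simp
      rw [mul_add, e]
      ring
    exact h2.congr_of_eventuallyEq (Filter.Eventually.of_forall hPlusEq)
  have hMinus : ∀ x, HasDerivAt (pMinus f) (pMinus f x - (1/2) * f x) x := by
    intro x
    have hd : HasDerivAt (fun t => (1/2) * (Real.exp t * G t))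
        ((1/2) * (Real.exp x * G x + Real.exp x * (-(h x)))) x :=
      ((Real.hasDerivAt_exp x).mul (hG x)).const_mul (1/2)
    have h2 : HasDerivAt (fun t => (1/2) * (Real.exp t * G t)) (pMinus f x - (1/2) * f x) x := by
      convert hd using 1
      rw [hMinusEq x]
      simp only [hh_def]
      have e : Real.exp x * (Real.exp (-x) * f x) = f x := by
        rw [← mul_assoc, ← Real.exp_add]; simp
      rw [mul_add]
      simp only [mul_neg, e]
      ring
    exact h2.congr_of_eventuallyEq (Filter.Eventually.of_forall hMinusEq)
  have hiicKey : ∀ x : ℝ, ∀ y ∈ Set.Iic x,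
      (1/2 : ℝ) * Real.exp (-x) * g y = (1/2) * Real.exp (-|x - y|) * f y := by
    intro x y hy
    have hyx : |x - y| = x - y := abs_of_nonneg (by simp only [mem_Iic] at hy; linarith)
    simp only [hg_def]
    rw [hyx, show -(x - y) = y - x from by ring, exp_split]
    ring
  have hioiKey : ∀ x : ℝ, ∀ y ∈ Set.Ioi x,
      (1/2 : ℝ) * Real.exp x * h y = (1/2) * Real.exp (-|x - y|) * f y := by
    intro x y hy
    have hyx : |x - y| = -(x - y) := abs_of_nonpos (by simp only [mem_Ioi] at hy; linarith)
    simp only [hh_def]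
    rw [hyx, show -(-(x - y)) = x - y from by ring, exp_split]
    ring
  have hiicInt : ∀ x : ℝ, IntegrableOn (fun y => (1/2) * Real.exp (-|x - y|) * f y) (Set.Iic x) := by
    intro x
    have h1 : IntegrableOn (fun y => (1/2) * Real.exp (-x) * g y) (Set.Iic x) :=
      (hgint x).const_mul _
    exact h1.congr_fun (hiicKey x) measurableSet_Iic
  have hioiInt : ∀ x : ℝ, IntegrableOn (fun y => (1/2) * Real.exp (-|x - y|) * f y) (Set.Ioi x) := by
    intro x
    have h1 : IntegrableOn (fun y => (1/2) * Real.exp x * h y) (Set.Ioi x) :=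
      MeasureTheory.IntegrableOn.mono_set ((hhint x).const_mul _) Ioi_subset_Ici_self
    exact h1.congr_fun (hioiKey x) measurableSet_Ioi
  have hConvEq : ∀ x, pConv f x = pPlus f x + pMinus f x := by
    intro x
    rw [pConv, ← intervalIntegral.integral_Iic_add_Ioi (hiicInt x) (hioiInt x)]
    congr 1
    · rw [← setIntegral_congr_fun measurableSet_Iic (hiicKey x), hPlusEq x,
        MeasureTheory.integral_const_mul]
      simp only [hF_def]
      ring
    · rw [← setIntegral_congr_fun measurableSet_Ioi (hioiKey x), hMinusEq x,
        MeasureTheory.integral_const_mul]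
      simp only [hG_def]
      rw [MeasureTheory.integral_Ici_eq_integral_Ioi]
      ring
  have hConv : ∀ x, HasDerivAt (pConv f) (pMinus f x - pPlus f x) x := by
    intro x
    have hd : HasDerivAt (fun t => pPlus f t + pMinus f t)
        ((-(pPlus f x) + (1/2) * f x) + (pMinus f x - (1/2) * f x)) x :=
      (hPlus x).add (hMinus x)
    have h2 : HasDerivAt (fun t => pPlus f t + pMinus f t) (pMinus f x - pPlus f x) x := by
      convert hd using 1; ring
    exact h2.congr_of_eventuallyEq (Filter.Eventually.of_forall hConvEq)
  have hderiv : deriv (pConv f) = fun x => pMinus f x - pPlus f x := by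
    funext x; exact (hConv x).deriv
  constructor
  · intro x; exact (hConv x).differentiableAt
  · intro x
    rw [hderiv]
    have hd : HasDerivAt (fun t => pMinus f t - pPlus f t)
        ((pMinus f x - (1/2) * f x) - (-(pPlus f x) + (1/2) * f x)) x :=
      (hMinus x).sub (hPlus x)
    convert hd using 1
    rw [hConvEq x]; ring
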